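/- (The forward representer lower-bounds the unnormalized filtering density.) Suppose: (a) α₀ = u₀ = π₀ pointwise; (b) for each 1 ≤ t ≤ T and every y, ∫ q_t(y,x) μ(dx) = 1; (c) for each 1 ≤ t ≤ T and every y: u_t(x,y) > 0 for μ-almost every x in {x : q_t(y,x) > 0}, the function x ↦ q_t(y,x)·log(u_t(x,y)·α_{t−1}(x)/q_t(y,x)) (set to 0 where q_t(y,x) = 0) is μ-integrable, and log α_t(y) = ∫ q_t(y,x)·log(u_t(x,y)·α_{t−1}(x)/q_t(y,x)) μ(dx); (d) for each 1 ≤ t ≤ T and every y, the function x ↦ u_t(x,y)·π_{t−1}(x) is μ-integrable, so that the Bayesian forward recursion π_t(y) = ∫ u_t(x,y)·π_{t−1}(x) μ(dx) is well defined with real values. Then for every 0 ≤ t ≤ T and every y ∈ E, α_t(y) ≤ π_t(y). -/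

import Mathlib

open MeasureTheory

/-- **The forward representer lower-bounds the unnormalized filtering density.**
Let `u₀` be the positive unnormalized initial density, `u t` the one-step unnormalized
transition densities, `q t` variational reverse-time transition kernel densities, `α t`
the positive forward value representers and `π t` the unnormalized Bayesian filtering
densities (`π 0 = u₀`, `π t y = ∫ u t (x,y) * π (t-1) x μ(dx)`).  Under the variational
forward value recursion for `α`, one has `α t y ≤ π t y` for all `0 ≤ t ≤ T` and all `y`. -/
theorem forward_representer_le_filtering_density
    {E : Type*} [MeasurableSpace E] (μ : Measure E) [SigmaFinite μ] (T : ℕ)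
    (u₀ : E → ℝ) (hu₀m : Measurable u₀) (hu₀pos : ∀ x, 0 < u₀ x)
    (u : ℕ → E × E → ℝ) (hum : ∀ t, Measurable (u t)) (hu0 : ∀ t p, 0 ≤ u t p)
    (q : ℕ → E × E → ℝ) (hqm : ∀ t, Measurable (q t)) (hq0 : ∀ t p, 0 ≤ q t p)
    (α : ℕ → E → ℝ) (hαm : ∀ t, Measurable (α t)) (hαpos : ∀ t y, 0 < α t y)
    (π : ℕ → E → ℝ)
    -- (a): α₀ = u₀ = π₀
    (hα0 : ∀ x, α 0 x = u₀ x) (hπ0 : ∀ x, π 0 x = u₀ x)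
    -- (b): each `q t (y, ·)` is a probability density
    (hb : ∀ t, 1 ≤ t → t ≤ T → ∀ y, (∫ x, q t (y, x) ∂μ) = 1)
    -- (c): positivity, integrability, and the variational forward value recursion
    (hc₁ : ∀ t, 1 ≤ t → t ≤ T → ∀ y,
      ∀ᵐ x ∂μ, 0 < q t (y, x) → 0 < u t (x, y))
    (hc₂ : ∀ t, 1 ≤ t → t ≤ T → ∀ y,
      Integrable (fun x => if q t (y, x) = 0 then 0
        else q t (y, x) * Real.log (u t (x, y) * α (t - 1) x / q t (y, x))) μ)
    (hc₃ : ∀ t, 1 ≤ t → t ≤ T → ∀ y,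
      Real.log (α t y) = ∫ x,
        (if q t (y, x) = 0 then 0
         else q t (y, x) * Real.log (u t (x, y) * α (t - 1) x / q t (y, x))) ∂μ)
    -- (d): the Bayesian forward recursion is well defined with real values
    (hd₁ : ∀ t, 1 ≤ t → t ≤ T → ∀ y,
      Integrable (fun x => u t (x, y) * π (t - 1) x) μ)
    (hd₂ : ∀ t, 1 ≤ t → t ≤ T → ∀ y,
      π t y = ∫ x, u t (x, y) * π (t - 1) x ∂μ) :
    ∀ t, t ≤ T → ∀ y : E, α t y ≤ π t y := by
  intro t
  induction t with
  | zero => intro _ y; rw [hα0, hπ0]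
  | succ n ih =>
    intro hT y
    have h1 : 1 ≤ n + 1 := Nat.le_add_left 1 n
    have ihy : ∀ x, α n x ≤ π n x := ih (Nat.le_of_succ_le hT)
    set t := n + 1 with htdef
    have ht1 : t - 1 = n := rfl
    set f : E → ℝ := fun x => u t (x, y) * α n x with hf
    have hfm : Measurable f :=
      ((hum t).comp (measurable_id.prodMk measurable_const)).mul (hαm n)
    have hf0 : ∀ x, 0 ≤ f x := fun x => mul_nonneg (hu0 t _) (hαpos n x).le
    have hfle : ∀ x, f x ≤ u t (x, y) * π n x := fun x =>
      mul_le_mul_of_nonneg_left (ihy x) (hu0 t _)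
    have hdπ := hd₁ t h1 hT y
    have hfint : Integrable f μ := by
      refine (hdπ.mono hfm.aestronglyMeasurable ?_)
      filter_upwards with x
      rw [Real.norm_eq_abs, Real.norm_eq_abs, abs_of_nonneg (hf0 x)]
      exact (hfle x).trans (le_abs_self _)
    have hqmy : Measurable fun x => q t (y, x) :=
      (hqm t).comp (measurable_const.prodMk measurable_id)
    have hqint : Integrable (fun x => q t (y, x)) μ := by
      by_contra h
      have := hb t h1 hT y
      rw [integral_undef h] at this
      norm_num at this
    set c : ℝ := ∫ x, f x ∂μ with hc
    have hcpos : 0 < c := by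
      rcases lt_or_eq_of_le (integral_nonneg (f := f) hf0) with h | h
      · exact h
      · exfalso
        have hzero : ∀ᵐ x ∂μ, f x = 0 := by
          have := (integral_eq_zero_iff_of_nonneg hf0 hfint).mp h.symm
          filter_upwards [this.le] with x hx using le_antisymm hx (hf0 x)
        have hq0ae : ∀ᵐ x ∂μ, q t (y, x) = 0 := by
          filter_upwards [hzero, hc₁ t h1 hT y] with x hx hux
          by_contra hq
          have hqpos : 0 < q t (y, x) := lt_of_le_of_ne (hq0 t _) (Ne.symm hq)
          have : 0 < f x := mul_pos (hux hqpos) (hαpos n x)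
          linarith
        have : (∫ x, q t (y, x) ∂μ) = 0 := by
          rw [integral_congr_ae hq0ae, integral_zero]
        rw [hb t h1 hT y] at this
        norm_num at this
    -- pointwise Gibbs inequality
    have hgint := hc₂ t h1 hT y
    have hrhsint : Integrable (fun x => f x / c - q t (y, x)
        + Real.log c * q t (y, x)) μ :=
      ((hfint.div_const c).sub hqint).add (hqint.const_mul _)
    have hptwise : ∀ᵐ x ∂μ,
        (if q t (y, x) = 0 then 0
          else q t (y, x) * Real.log (u t (x, y) * α (t - 1) x / q t (y, x)))
        ≤ f x / c - q t (y, x) + Real.log c * q t (y, x) := by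
      filter_upwards [hc₁ t h1 hT y] with x hux
      by_cases hq : q t (y, x) = 0
      · rw [if_pos hq, hq]
        simpa using div_nonneg (hf0 x) hcpos.le
      · rw [if_neg hq]
        have hqpos : 0 < q t (y, x) := lt_of_le_of_ne (hq0 t _) (Ne.symm hq)
        have hupos : 0 < u t (x, y) := hux hqpos
        have hfpos : 0 < f x := mul_pos hupos (hαpos n x)
        have hratio : 0 < f x / (c * q t (y, x)) := by positivity
        have hlog := Real.log_le_sub_one_of_pos hratio
        have hsplit : Real.log (u t (x, y) * α (t - 1) x / q t (y, x))
            = Real.log (f x / (c * q t (y, x))) + Real.log c := by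
          have : u t (x, y) * α (t - 1) x / q t (y, x)
              = f x / (c * q t (y, x)) * c := by
            field_simp [hf]
            simp only [hf, ht1]
          rw [this, Real.log_mul (by positivity) (ne_of_gt hcpos)]
        rw [hsplit]
        have h2 : q t (y, x) * Real.log (f x / (c * q t (y, x)))
            ≤ q t (y, x) * (f x / (c * q t (y, x)) - 1) :=
          mul_le_mul_of_nonneg_left hlog hqpos.le
        have h3 : q t (y, x) * (f x / (c * q t (y, x)) - 1) = f x / c - q t (y, x) := by
          field_simp
        nlinarith [h2, h3]
    have hlogle : Real.log (α t y) ≤ Real.log c := by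
      rw [hc₃ t h1 hT y]
      calc (∫ x, (if q t (y, x) = 0 then 0
            else q t (y, x) * Real.log (u t (x, y) * α (t - 1) x / q t (y, x))) ∂μ)
          ≤ ∫ x, (f x / c - q t (y, x) + Real.log c * q t (y, x)) ∂μ :=
            integral_mono_ae hgint hrhsint hptwise
        _ = Real.log c := by
            have i1 : Integrable (fun x => f x / c - q t (y, x)) μ := by
              exact (hfint.div_const c).sub hqint
            have i2 : Integrable (fun x => Real.log c * q t (y, x)) μ :=
              hqint.const_mul _
            have i3 : Integrable (fun x => f x / c) μ := hfint.div_const c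
            rw [integral_add i1 i2, integral_sub i3 hqint, integral_div,
              integral_const_mul, hb t h1 hT y, ← hc, div_self (ne_of_gt hcpos)]
            ring
    have hαc : α t y ≤ c :=
      (Real.log_le_log_iff (hαpos t y) hcpos).mp hlogle
    have hcπ : c ≤ π t y := by
      rw [hd₂ t h1 hT y]
      exact integral_mono hfint hdπ hfle
    exact hαc.trans hcπ
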